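/- Under restriction A1, the eigenvalues of (I_p - M_d)⁻¹ are d+1 with multiplicity r and 1 + Σ_{j=1}^d c^{2j} with multiplicity p - r. -/

import Mathlib

open Matrix Polynomial

/-- The recursively defined matrices `M_ℓ = W_ℓ (I + W_ℓᵀ W_ℓ - M_{ℓ-1})⁻¹ W_ℓᵀ`, `M₀ = 0`. -/
noncomputable def MrecGen {ι : Type*} [Fintype ι] [DecidableEq ι]
    (W : ℕ → Matrix ι ι ℝ) : ℕ → Matrix ι ι ℝ
  | 0 => 0
  | (k + 1) => W (k + 1) * (1 + (W (k + 1))ᵀ * W (k + 1) - MrecGen W k)⁻¹ * (W (k + 1))ᵀ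

section Aux

variable {m n : Type*} [Fintype m] [DecidableEq m] [Fintype n] [DecidableEq n]

lemma perm_mul_transpose (σ : Equiv.Perm m) :
    (σ.permMatrix ℝ) * (σ.permMatrix ℝ)ᵀ = 1 := by
  rw [← PEquiv.toMatrix_symm, ← Equiv.toPEquiv_symm, ← PEquiv.toMatrix_trans,
    ← Equiv.toPEquiv_trans]
  simp

lemma transpose_mul_perm (σ : Equiv.Perm m) :
    (σ.permMatrix ℝ)ᵀ * (σ.permMatrix ℝ) = 1 := by
  rw [← PEquiv.toMatrix_symm, ← Equiv.toPEquiv_symm, ← PEquiv.toMatrix_trans,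
    ← Equiv.toPEquiv_trans]
  simp

lemma fromBlocks_congr' {A A' : Matrix m m ℝ} {D D' : Matrix n n ℝ}
    (h1 : A = A') (h2 : D = D') :
    Matrix.fromBlocks A 0 0 D = Matrix.fromBlocks A' (0 : Matrix m n ℝ) 0 D' := by
  rw [h1, h2]

lemma fromBlocks_diag_mul (A A' : Matrix m m ℝ) (D D' : Matrix n n ℝ) :
    Matrix.fromBlocks A 0 0 D * Matrix.fromBlocks A' 0 0 D'
      = Matrix.fromBlocks (A * A') (0 : Matrix m n ℝ) 0 (D * D') := by
  rw [Matrix.fromBlocks_multiply]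
  simp

lemma fromBlocks_diag_sub (A A' : Matrix m m ℝ) (D D' : Matrix n n ℝ) :
    Matrix.fromBlocks A 0 0 D - Matrix.fromBlocks A' 0 0 D'
      = Matrix.fromBlocks (A - A') (0 : Matrix m n ℝ) 0 (D - D') := by
  ext (i | i) (j | j) <;> simp

lemma fromBlocks_diag_add (A A' : Matrix m m ℝ) (D D' : Matrix n n ℝ) :
    Matrix.fromBlocks A 0 0 D + Matrix.fromBlocks A' 0 0 D'
      = Matrix.fromBlocks (A + A') (0 : Matrix m n ℝ) 0 (D + D') := by
  ext (i | i) (j | j) <;> simp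

lemma one_add_smul_sub_smul (y z w : ℝ) (h : 1 + y - z = w) :
    (1 : Matrix m m ℝ) + y • 1 - z • 1 = w • 1 := by
  rw [← h, sub_smul, add_smul, one_smul]

lemma one_sub_smul (z w : ℝ) (h : 1 - z = w) :
    (1 : Matrix m m ℝ) - z • 1 = w • 1 := by
  rw [← h, sub_smul, one_smul]

lemma blockDiag_inv (α β : ℝ) (hα : α ≠ 0) (hβ : β ≠ 0) :
    (Matrix.fromBlocks (α • (1 : Matrix m m ℝ)) 0 0 (β • (1 : Matrix n n ℝ)))⁻¹
      = Matrix.fromBlocks (α⁻¹ • 1) 0 0 (β⁻¹ • 1) := by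
  apply Matrix.inv_eq_right_inv
  rw [fromBlocks_diag_mul, ← Matrix.fromBlocks_one]
  apply fromBlocks_congr' <;>
    simp [smul_smul, mul_inv_cancel₀, hα, hβ]

lemma charpoly_smul_one (μ : ℝ) :
    (μ • (1 : Matrix m m ℝ)).charpoly = (X - C μ) ^ (Fintype.card m) := by
  have h : charmatrix (μ • (1 : Matrix m m ℝ)) = diagonal (fun _ => X - C μ) := by
    ext i j
    by_cases h : i = j <;>
      simp [Matrix.charmatrix_apply, Matrix.diagonal, Matrix.one_apply, h]
  rw [Matrix.charpoly, h, Matrix.det_diagonal]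
  simp

end Aux

/-- Under restriction A1, the eigenvalues of `(I_p - M_d)⁻¹` are `d + 1` with multiplicity
`r` and `1 + ∑_{j=1}^d c^{2j}` with multiplicity `p - r`, i.e. the characteristic
polynomial of `(I_p - M_d)⁻¹` is `(X - (d+1))^r (X - (1 + ∑_{j=1}^d c^{2j}))^{p-r}`. -/
theorem eigenvalues_inv_one_sub_Mrec_of_restrictionA1
    (r q d : ℕ) (c : ℝ) (hc0 : 0 < c) (hc1 : c < 1)
    (R : ℕ → Equiv.Perm (Fin r))
    (W : ℕ → Matrix (Fin r ⊕ Fin q) (Fin r ⊕ Fin q) ℝ)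
    (hW : ∀ i, 1 ≤ i → i ≤ d →
      W i = Matrix.fromBlocks ((R i).permMatrix ℝ) 0 0 (c • (1 : Matrix (Fin q) (Fin q) ℝ))) :
    ((1 - MrecGen W d)⁻¹).charpoly =
      (X - C ((d : ℝ) + 1)) ^ r * (X - C (1 + ∑ j ∈ Finset.Icc 1 d, c ^ (2 * j))) ^ q := by
  set s : ℕ → ℝ := fun k => 1 + ∑ j ∈ Finset.Icc 1 k, c ^ (2 * j) with hs
  have hs0 : s 0 = 1 := by simp [hs]
  have hspos : ∀ k, 0 < s k := by
    intro k
    have h : (0:ℝ) ≤ ∑ j ∈ Finset.Icc 1 k, c ^ (2 * j) :=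
      Finset.sum_nonneg fun j _ => by positivity
    have : s k = 1 + ∑ j ∈ Finset.Icc 1 k, c ^ (2 * j) := by rw [hs]
    linarith
  have hstep : ∀ k, s (k + 1) = s k + c ^ (2 * (k + 1)) := by
    intro k
    have : ∑ j ∈ Finset.Icc 1 (k+1), c ^ (2*j)
        = (∑ j ∈ Finset.Icc 1 k, c ^ (2*j)) + c ^ (2*(k+1)) :=
      Finset.sum_Icc_succ_top (Nat.le_add_left 1 k) _
    simp only [hs]
    rw [this]; ring
  have hsrec : ∀ k, s (k + 1) = 1 + c ^ 2 * s k := by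
    intro k
    induction k with
    | zero =>
      rw [hstep 0, hs0]
      norm_num
    | succ k ih =>
      have hpow : c ^ (2 * (k + 1 + 1)) = c ^ 2 * c ^ (2 * (k + 1)) := by
        rw [← pow_add]; congr 1; omega
      have ih' : s k + c ^ (2 * (k + 1)) = 1 + c ^ 2 * s k := by
        rw [← hstep k]; exact ih
      rw [hstep (k+1), hstep k, hpow]
      linear_combination ih'
  have key : ∀ ℓ, ℓ ≤ d → MrecGen W ℓ =
      Matrix.fromBlocks (((ℓ : ℝ) / (ℓ + 1)) • 1) 0 0 ((1 - (s ℓ)⁻¹) • 1) := by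
    intro ℓ
    induction ℓ with
    | zero => intro _; simp [MrecGen, hs0]
    | succ k ih =>
      intro hkd
      have hk : k ≤ d := Nat.le_of_succ_le hkd
      have hWk := hW (k + 1) (Nat.le_add_left 1 k) hkd
      have hkpos : (0:ℝ) < (k:ℝ) + 1 := by positivity
      have hk2pos : (0:ℝ) < (k:ℝ) + 2 := by positivity
      have hsk := (hspos k).ne'
      have hden : (0:ℝ) < c ^ 2 * s k + 1 := by
        have := hspos k; positivity
      set P := (R (k+1)).permMatrix ℝ with hP
      have hPPt : P * Pᵀ = 1 := perm_mul_transpose (R (k+1))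
      have hPtP : Pᵀ * P = 1 := transpose_mul_perm (R (k+1))
      rw [MrecGen, ih hk, hWk]
      have hT : (Matrix.fromBlocks P 0 0 (c • (1 : Matrix (Fin q) (Fin q) ℝ)))ᵀ
          = Matrix.fromBlocks Pᵀ 0 0 (c • 1) := by
        rw [Matrix.fromBlocks_transpose, Matrix.transpose_smul, Matrix.transpose_one,
          Matrix.transpose_zero, Matrix.transpose_zero]
      rw [hT]
      have hmid : (1 + Matrix.fromBlocks Pᵀ 0 0 (c • (1 : Matrix (Fin q) (Fin q) ℝ)) *
            Matrix.fromBlocks P 0 0 (c • 1) -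
            Matrix.fromBlocks (((k : ℝ) / (k + 1)) • 1) 0 0 ((1 - (s k)⁻¹) • 1))
          = Matrix.fromBlocks ((((k:ℝ) + 2) / ((k:ℝ) + 1)) • 1) 0 0
              (((c ^ 2 * s k + 1) / s k) • 1) := by
        rw [fromBlocks_diag_mul, ← Matrix.fromBlocks_one, fromBlocks_diag_add,
          fromBlocks_diag_sub]
        apply fromBlocks_congr'
        · rw [hPtP]
          have h1 : (1 : Matrix (Fin r) (Fin r) ℝ) + 1 = (1:ℝ) • 1 + (1:ℝ) • 1 := by
            rw [one_smul]
          rw [h1, ← add_smul, ← sub_smul]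
          congr 1
          field_simp
          ring
        · have h2 : (c • (1 : Matrix (Fin q) (Fin q) ℝ)) * (c • 1) = (c * c) • 1 := by
            rw [Matrix.smul_mul, Matrix.mul_smul, smul_smul, Matrix.one_mul]
          rw [h2]
          apply one_add_smul_sub_smul
          field_simp
          ring
      rw [hmid, blockDiag_inv _ _ (by positivity)
          (by have := hspos k; positivity)]
      rw [fromBlocks_diag_mul, fromBlocks_diag_mul]
      apply fromBlocks_congr'
      · rw [Matrix.mul_smul, Matrix.smul_mul, Matrix.mul_one, hPPt]
        congr 1
        push_cast
        rw [inv_div]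
        rw [div_eq_div_iff (by positivity) (by positivity)]
        ring
      · rw [Matrix.smul_mul, Matrix.mul_smul, Matrix.mul_smul, Matrix.one_mul,
          Matrix.mul_one, smul_smul, smul_smul]
        congr 1
        rw [hsrec k, inv_div]
        have hs1 := (hspos (k+1)).ne'
        rw [hsrec k] at hs1
        field_simp
        ring
  have hMd := key d le_rfl
  have hdpos : (0:ℝ) < (d:ℝ) + 1 := by positivity
  have hsd := hspos d
  have h1M : (1 : Matrix (Fin r ⊕ Fin q) (Fin r ⊕ Fin q) ℝ) - MrecGen W d
      = Matrix.fromBlocks ((((d:ℝ) + 1)⁻¹) • 1) 0 0 ((s d)⁻¹ • 1) := by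
    rw [hMd, ← Matrix.fromBlocks_one, fromBlocks_diag_sub]
    apply fromBlocks_congr'
    · apply one_sub_smul
      field_simp
      ring
    · apply one_sub_smul
      ring
  rw [h1M, blockDiag_inv _ _ (by positivity) (by positivity), inv_inv, inv_inv]
  rw [Matrix.charpoly_fromBlocks_zero₂₁, charpoly_smul_one, charpoly_smul_one]
  simp [hs]
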